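/- arXiv:1206.1164 — 4 statements merged into one kernel-verified Lean document; each statement's English description precedes it below -/
import Mathlib

section
/- Let Ω ⊆ ℝᴺ be a nonempty bounded open set, and let V : ℝ → ℝ be differentiable with strictly monotone increasing derivative V′ (i.e. V is strictly convex). Suppose φ₁, φ₂ : ℝᴺ → ℝ are continuous on the closure of Ω, twice continuously differentiable on Ω, and satisfy Δφᵢ(x) = V′(φᵢ(x)) for all x ∈ Ω, i = 1, 2. If φ₁ = φ₂ on the topological frontier of Ω, then φ₁ = φ₂ on the closure of Ω. -/
open Filter Topology

/-- Second derivative test: at a local max, the second derivative is nonpositive. -/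
lemma second_deriv_nonpos_of_isLocalMax {g g' : ℝ → ℝ} {c : ℝ}
    (hg : ∀ᶠ t in 𝓝 (0:ℝ), HasDerivAt g (g' t) t)
    (hg' : HasDerivAt g' c 0) (hmax : IsLocalMax g 0) : c ≤ 0 := by
  by_contra hc
  push_neg at hc
  have h0 : g' 0 = 0 := by
    have := hmax.deriv_eq_zero
    rwa [hg.self_of_nhds.deriv] at this
  -- slope of g' tends to c > 0
  have hslope : Tendsto (fun t : ℝ => g' t / t) (𝓝[≠] (0:ℝ)) (𝓝 c) := by
    have := hasDerivAt_iff_tendsto_slope.mp hg'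
    have heq : slope g' 0 = fun t => g' t / t := by
      funext t
      rw [slope_def_field, h0]
      ring
    rwa [heq] at this
  have hev : ∀ᶠ t in 𝓝[≠] (0:ℝ), 0 < g' t / t :=
    hslope.eventually (eventually_gt_nhds hc)
  -- get ε
  obtain ⟨ε₁, hε₁, h1⟩ := Metric.eventually_nhds_iff.mp hg
  have hev' : ∀ᶠ t in 𝓝[≠] (0:ℝ), 0 < g' t / t := hev
  rw [eventually_nhdsWithin_iff, Metric.eventually_nhds_iff] at hev'
  obtain ⟨ε₂, hε₂, h2⟩ := hev'
  obtain ⟨ε₃, hε₃, h3⟩ := Metric.eventually_nhds_iff.mp hmax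
  set ε := min ε₁ (min ε₂ ε₃) with hε
  have hεpos : 0 < ε := lt_min hε₁ (lt_min hε₂ hε₃)
  have key : ∀ t ∈ Set.Ioo (0:ℝ) ε, 0 < g' t := by
    intro t ht
    have htne : t ≠ 0 := ne_of_gt ht.1
    have : dist t 0 < ε₂ := by
      rw [Real.dist_eq, sub_zero, abs_of_pos ht.1]
      exact ht.2.trans_le ((min_le_right _ _).trans (min_le_left _ _))
    have := h2 this htne
    exact (div_pos_iff.mp this).resolve_right (fun h => absurd ht.1 (not_lt.mpr h.2.le)) |>.1
  have hmono : StrictMonoOn g (Set.Icc 0 (ε/2)) := by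
    apply strictMonoOn_of_deriv_pos (convex_Icc _ _)
    · intro t ht
      have : dist t 0 < ε₁ := by
        rw [Real.dist_eq, sub_zero, abs_of_nonneg ht.1]
        calc t ≤ ε/2 := ht.2
        _ < ε := by linarith
        _ ≤ ε₁ := min_le_left _ _
      exact (h1 this).continuousAt.continuousWithinAt
    · intro t ht
      rw [interior_Icc] at ht
      have htΩ : dist t 0 < ε₁ := by
        rw [Real.dist_eq, sub_zero, abs_of_pos ht.1]
        calc t < ε/2 := ht.2
        _ < ε := by linarith
        _ ≤ ε₁ := min_le_left _ _
      rw [(h1 htΩ).deriv]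
      exact key t ⟨ht.1, by linarith [ht.2]⟩
  have hlt : g 0 < g (ε/2) :=
    hmono (Set.left_mem_Icc.mpr (by linarith)) (Set.right_mem_Icc.mpr (by linarith)) (by linarith)
  have : g (ε/2) ≤ g 0 := by
    apply h3
    rw [Real.dist_eq, sub_zero, abs_of_pos (by linarith)]
    calc ε/2 < ε := by linarith
    _ ≤ ε₃ := (min_le_right _ _).trans (min_le_right _ _)
  linarith

/-- The Laplacian of a function on Euclidean space: the sum of its second
partial derivatives along the standard basis directions. -/
noncomputable def laplacian {n : ℕ} (f : EuclideanSpace ℝ (Fin n) → ℝ)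
    (x : EuclideanSpace ℝ (Fin n)) : ℝ :=
  ∑ i : Fin n,
    fderiv ℝ (fderiv ℝ f) x (EuclideanSpace.single i 1) (EuclideanSpace.single i 1)

lemma laplacian_nonpos_of_isLocalMax {n : ℕ} {Ω : Set (EuclideanSpace ℝ (Fin n))}
    {u : EuclideanSpace ℝ (Fin n) → ℝ} (hopen : IsOpen Ω)
    {x₀ : EuclideanSpace ℝ (Fin n)} (hx₀ : x₀ ∈ Ω) (hu : ContDiffOn ℝ 2 u Ω)
    (hmax : IsLocalMax u x₀) : laplacian u x₀ ≤ 0 := by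
  have hf' : DifferentiableAt ℝ (fderiv ℝ u) x₀ := by
    have h2 : ContDiffAt ℝ 2 u x₀ := hu.contDiffAt (hopen.mem_nhds hx₀)
    have : ContDiffAt ℝ 1 (fderiv ℝ u) x₀ := h2.fderiv_right (by norm_num)
    exact this.differentiableAt one_ne_zero
  apply Finset.sum_nonpos
  intro i _
  set v := EuclideanSpace.single i (1:ℝ) with hv
  set line : ℝ → EuclideanSpace ℝ (Fin n) := fun t => x₀ + t • v with hlinedef
  have hline0 : line 0 = x₀ := by simp [hlinedef]
  have hlinederiv : ∀ t : ℝ, HasDerivAt line v t := by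
    intro t
    have := ((hasDerivAt_id t).smul_const v).const_add x₀
    simpa [hlinedef] using this
  have hlinecont : Continuous line := by continuity
  have hmemnhds : ∀ᶠ t in 𝓝 (0:ℝ), line t ∈ Ω := by
    have : ContinuousAt line 0 := hlinecont.continuousAt
    exact this (hopen.mem_nhds (hline0 ▸ hx₀))
  set g : ℝ → ℝ := fun t => u (line t) with hgdef
  set g' : ℝ → ℝ := fun t => fderiv ℝ u (line t) v with hg'def
  have hg : ∀ᶠ t in 𝓝 (0:ℝ), HasDerivAt g (g' t) t := by
    filter_upwards [hmemnhds] with t ht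
    have hdiff : DifferentiableAt ℝ u (line t) :=
      (hu.contDiffAt (hopen.mem_nhds ht)).differentiableAt (by norm_num)
    exact hdiff.hasFDerivAt.comp_hasDerivAt t (hlinederiv t)
  have hg' : HasDerivAt g' (fderiv ℝ (fderiv ℝ u) x₀ v v) 0 := by
    have hA : HasDerivAt (fun t => fderiv ℝ u (line t)) (fderiv ℝ (fderiv ℝ u) x₀ v) 0 := by
      have h := hf'.hasFDerivAt
      rw [← hline0] at h
      have := h.comp_hasDerivAt 0 (hlinederiv 0)
      rw [hline0] at this
      exact this
    exact (ContinuousLinearMap.apply ℝ ℝ v).hasFDerivAt.comp_hasDerivAt 0 hA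
  have hgmax : IsLocalMax g 0 := by
    have : Tendsto line (𝓝 0) (𝓝 x₀) := hline0 ▸ hlinecont.continuousAt
    have hev := this.eventually hmax
    have hg0 : g 0 = u x₀ := by rw [hgdef]; simp [hline0]
    unfold IsLocalMax IsMaxFilter
    rw [hg0]
    exact hev
  exact second_deriv_nonpos_of_isLocalMax hg hg' hgmax

lemma aux_le {N : ℕ} (Ω : Set (EuclideanSpace ℝ (Fin N)))
    (hbdd : Bornology.IsBounded Ω) (hopen : IsOpen Ω)
    (V : ℝ → ℝ) (hV' : StrictMono (deriv V))
    (φ₁ φ₂ : EuclideanSpace ℝ (Fin N) → ℝ)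
    (hc₁ : ContinuousOn φ₁ (closure Ω)) (hc₂ : ContinuousOn φ₂ (closure Ω))
    (hd₁ : ContDiffOn ℝ 2 φ₁ Ω) (hd₂ : ContDiffOn ℝ 2 φ₂ Ω)
    (heq₁ : ∀ x ∈ Ω, laplacian φ₁ x = deriv V (φ₁ x))
    (heq₂ : ∀ x ∈ Ω, laplacian φ₂ x = deriv V (φ₂ x))
    (hbc : ∀ x ∈ frontier Ω, φ₁ x = φ₂ x) :
    ∀ x ∈ closure Ω, φ₁ x ≤ φ₂ x := by
  set u : EuclideanSpace ℝ (Fin N) → ℝ := fun x => φ₁ x - φ₂ x with hudef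
  have hucont : ContinuousOn u (closure Ω) := hc₁.sub hc₂
  have hcomp : IsCompact (closure Ω) := hbdd.isCompact_closure
  by_contra hcon
  push_neg at hcon
  obtain ⟨z, hz, hzlt⟩ := hcon
  obtain ⟨x₀, hx₀, hmax⟩ := hcomp.exists_isMaxOn ⟨z, hz⟩ hucont
  have hux₀ : 0 < u x₀ := lt_of_lt_of_le (by simpa [hudef] using hzlt) (hmax hz)
  have hx₀Ω : x₀ ∈ Ω := by
    by_contra hnot
    have hfr : x₀ ∈ frontier Ω := by
      rw [frontier, hopen.interior_eq]
      exact ⟨hx₀, hnot⟩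
    exact absurd hux₀ (by simp [hudef, hbc x₀ hfr])
  have hulocmax : IsLocalMax u x₀ := by
    filter_upwards [hopen.mem_nhds hx₀Ω] with y hy using hmax (subset_closure hy)
  have hdu : ContDiffOn ℝ 2 u Ω := hd₁.sub hd₂
  have hlap : laplacian u x₀ ≤ 0 := laplacian_nonpos_of_isLocalMax hopen hx₀Ω hdu hulocmax
  -- linearity of laplacian at x₀
  have hfd : ∀ y ∈ Ω, fderiv ℝ u y = fderiv ℝ φ₁ y - fderiv ℝ φ₂ y := by
    intro y hy
    exact fderiv_fun_sub ((hd₁.contDiffAt (hopen.mem_nhds hy)).differentiableAt (by norm_num))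
      ((hd₂.contDiffAt (hopen.mem_nhds hy)).differentiableAt (by norm_num))
  have hev : fderiv ℝ u =ᶠ[nhds x₀] fun y => fderiv ℝ φ₁ y - fderiv ℝ φ₂ y := by
    filter_upwards [hopen.mem_nhds hx₀Ω] with y hy using hfd y hy
  have hdf1 : DifferentiableAt ℝ (fderiv ℝ φ₁) x₀ :=
    ((hd₁.contDiffAt (hopen.mem_nhds hx₀Ω)).fderiv_right (le_refl 2)).differentiableAt one_ne_zero
  have hdf2 : DifferentiableAt ℝ (fderiv ℝ φ₂) x₀ :=
    ((hd₂.contDiffAt (hopen.mem_nhds hx₀Ω)).fderiv_right (le_refl 2)).differentiableAt one_ne_zero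
  have hsnd : fderiv ℝ (fderiv ℝ u) x₀
      = fderiv ℝ (fderiv ℝ φ₁) x₀ - fderiv ℝ (fderiv ℝ φ₂) x₀ := by
    rw [hev.fderiv_eq, fderiv_fun_sub hdf1 hdf2]
  have hlapeq : laplacian u x₀ = laplacian φ₁ x₀ - laplacian φ₂ x₀ := by
    unfold laplacian
    rw [hsnd, ← Finset.sum_sub_distrib]
    simp
  rw [hlapeq, heq₁ x₀ hx₀Ω, heq₂ x₀ hx₀Ω] at hlap
  have : deriv V (φ₂ x₀) < deriv V (φ₁ x₀) := hV' (by simpa [hudef, sub_pos] using hux₀)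
  linarith

/-- Dirichlet uniqueness for the scalar field toy model: two solutions of
`Δφ = V'(φ)` on a bounded open set, for a strictly convex potential `V`, that
agree on the boundary agree everywhere on the closure. -/
theorem dirichlet_uniqueness_strictly_convex_potential
    {N : ℕ} (Ω : Set (EuclideanSpace ℝ (Fin N)))
    (hne : Ω.Nonempty) (hbdd : Bornology.IsBounded Ω) (hopen : IsOpen Ω)
    (V : ℝ → ℝ) (hV : Differentiable ℝ V) (hV' : StrictMono (deriv V))
    (φ₁ φ₂ : EuclideanSpace ℝ (Fin N) → ℝ)
    (hc₁ : ContinuousOn φ₁ (closure Ω)) (hc₂ : ContinuousOn φ₂ (closure Ω))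
    (hd₁ : ContDiffOn ℝ 2 φ₁ Ω) (hd₂ : ContDiffOn ℝ 2 φ₂ Ω)
    (heq₁ : ∀ x ∈ Ω, laplacian φ₁ x = deriv V (φ₁ x))
    (heq₂ : ∀ x ∈ Ω, laplacian φ₂ x = deriv V (φ₂ x))
    (hbc : ∀ x ∈ frontier Ω, φ₁ x = φ₂ x) :
    ∀ x ∈ closure Ω, φ₁ x = φ₂ x := by
  intro x hx
  exact le_antisymm
    (aux_le Ω hbdd hopen V hV' φ₁ φ₂ hc₁ hc₂ hd₁ hd₂ heq₁ heq₂ hbc x hx)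
    (aux_le Ω hbdd hopen V hV' φ₂ φ₁ hc₂ hc₁ hd₂ hd₁ heq₂ heq₁ (fun y hy => (hbc y hy).symm) x hx)
end

section
/- Let B ⊆ ℝᴺ be the open ball of radius R > 0 centered at the origin, and let V : ℝ → ℝ be twice continuously differentiable with V″(s) > 0 for all s ∈ ℝ. Suppose φ₁, φ₂ : ℝᴺ → ℝ are twice continuously differentiable on an open set containing the closed ball of radius R and satisfy Δφᵢ(x) = V′(φᵢ(x)) for all x ∈ B, i = 1, 2. If the outward normal derivatives agree on the boundary sphere, i.e. Dφ₁(x)[x] = Dφ₂(x)[x] for all x with ‖x‖ = R (where Dφ(x) denotes the Fréchet derivative at x), then φ₁ = φ₂ on the closed ball of radius R. -/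
open Filter Metric Set
open scoped Topology

open Filter Metric Set
open scoped Topology

/-- 1D second derivative test at a local max at `0`. -/
lemma aux_second_deriv_nonpos_of_isLocalMax {g g' : ℝ → ℝ} {c : ℝ}
    (hd : ∀ᶠ t in 𝓝 (0:ℝ), HasDerivAt g (g' t) t)
    (hd2 : HasDerivAt g' c 0) (hmax : IsLocalMax g 0) : c ≤ 0 := by
  by_contra hc
  push_neg at hc
  have hg'0 : g' 0 = 0 := hmax.hasDerivAt_eq_zero hd.self_of_nhds
  have hslope : Tendsto (fun t => g' t / t) (𝓝[>] (0:ℝ)) (𝓝 c) := by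
    have h := hasDerivAt_iff_tendsto_slope.1 hd2
    have h' : Tendsto (slope g' 0) (𝓝[>] (0:ℝ)) (𝓝 c) :=
      h.mono_left (nhdsWithin_mono _ (fun t ht => ne_of_gt ht))
    refine h'.congr (fun t => ?_)
    simp [slope_def_field, hg'0, div_eq_inv_mul]
  have hpos : ∀ᶠ t in 𝓝[>] (0:ℝ), 0 < g' t := by
    filter_upwards [hslope.eventually (eventually_gt_nhds hc), self_mem_nhdsWithin]
      with t h1 h2
    have h3 := mul_pos h1 h2
    rwa [div_mul_cancel₀ _ (ne_of_gt h2)] at h3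
  have hall : ∀ᶠ t in 𝓝[>] (0:ℝ), 0 < g' t ∧ HasDerivAt g (g' t) t ∧ g t ≤ g 0 :=
    hpos.and ((hd.and hmax).filter_mono nhdsWithin_le_nhds)
  obtain ⟨u, hu, hsub⟩ := mem_nhdsGT_iff_exists_Ioc_subset.1 hall
  have hu0 : (0:ℝ) < u := hu
  have hcont : ContinuousOn g (Icc 0 u) := by
    intro t ht
    rcases eq_or_lt_of_le ht.1 with h | h
    · exact h ▸ hd.self_of_nhds.continuousAt.continuousWithinAt
    · exact ((hsub ⟨h, ht.2⟩).2.1.continuousAt).continuousWithinAt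
  have hmono := strictMonoOn_of_deriv_pos (convex_Icc (0:ℝ) u) hcont (fun t ht => by
    rw [interior_Icc] at ht
    rw [(hsub ⟨ht.1, ht.2.le⟩).2.1.deriv]
    exact (hsub ⟨ht.1, ht.2.le⟩).1)
  have h1 : g 0 < g u := hmono (left_mem_Icc.2 hu0.le) (right_mem_Icc.2 hu0.le) hu0
  exact absurd h1 (not_lt.2 (hsub ⟨hu0, le_rfl⟩).2.2)

/-- Second directional derivative is nonpositive at an interior local max of a `C²` function. -/
lemma aux_sdd_nonpos {n : ℕ} {f : EuclideanSpace ℝ (Fin n) → ℝ}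
    {s : Set (EuclideanSpace ℝ (Fin n))} (hs : IsOpen s) (hf : ContDiffOn ℝ 2 f s)
    {x : EuclideanSpace ℝ (Fin n)} (hx : x ∈ s) (hmax : IsLocalMax f x)
    (v : EuclideanSpace ℝ (Fin n)) :
    fderiv ℝ (fderiv ℝ f) x v v ≤ 0 := by
  have hf1 : ContDiffOn ℝ 1 (fderiv ℝ f) s := hf.fderiv_of_isOpen hs (by norm_num)
  have hfd : DifferentiableOn ℝ f s := hf.differentiableOn (by norm_num)
  have hfd1 : DifferentiableAt ℝ (fderiv ℝ f) x :=
    (hf1.differentiableOn one_ne_zero).differentiableAt (hs.mem_nhds hx)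
  set L : ℝ → EuclideanSpace ℝ (Fin n) := fun t => x + t • v with hLdef
  have hL0 : L 0 = x := by simp [hLdef]
  have hL : ∀ t : ℝ, HasDerivAt L v t := fun t => by
    simpa [hLdef] using ((hasDerivAt_id t).smul_const v).const_add x
  have hLt : Tendsto L (𝓝 0) (𝓝 x) := by
    rw [← hL0]; exact (hL 0).continuousAt
  have hnhds : ∀ᶠ t in 𝓝 (0:ℝ), L t ∈ s := hLt (hs.mem_nhds hx)
  have hd : ∀ᶠ t in 𝓝 (0:ℝ), HasDerivAt (fun t => f (L t)) (fderiv ℝ f (L t) v) t := by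
    filter_upwards [hnhds] with t ht
    exact ((hfd.differentiableAt (hs.mem_nhds ht)).hasFDerivAt).comp_hasDerivAt t (hL t)
  have hd2 : HasDerivAt (fun t => fderiv ℝ f (L t) v) (fderiv ℝ (fderiv ℝ f) x v v) 0 := by
    have h1 : HasFDerivAt (fun y => fderiv ℝ f y v)
        ((ContinuousLinearMap.apply ℝ ℝ v).comp (fderiv ℝ (fderiv ℝ f) x)) x :=
      (ContinuousLinearMap.apply ℝ ℝ v).hasFDerivAt.comp x hfd1.hasFDerivAt
    have h1' : HasFDerivAt (fun y => fderiv ℝ f y v)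
        ((ContinuousLinearMap.apply ℝ ℝ v).comp (fderiv ℝ (fderiv ℝ f) x)) (L 0) := by
      rw [hL0]; exact h1
    exact h1'.comp_hasDerivAt 0 (hL 0)
  have hgm : IsLocalMax (fun t => f (L t)) 0 := by
    have h := hLt.eventually hmax
    refine h.mono fun t ht => ?_
    simpa [hL0] using ht
  exact aux_second_deriv_nonpos_of_isLocalMax hd hd2 hgm

/-- The real inner product, bundled as a continuous linear map into the dual. -/
noncomputable def realInnerCLM {n : ℕ} :
    EuclideanSpace ℝ (Fin n) →L[ℝ] (EuclideanSpace ℝ (Fin n) →L[ℝ] ℝ) :=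
  LinearMap.mkContinuous
    { toFun := fun y => (innerSL ℝ) y
      map_add' := fun a b => by ext z; simp [inner_add_left]
      map_smul' := fun c a => by ext z; simp [inner_smul_left] }
    1 (fun y => by simp [innerSL_apply_norm])

lemma realInnerCLM_apply {n : ℕ} (x y : EuclideanSpace ℝ (Fin n)) :
    realInnerCLM x y = inner ℝ x y := rfl

set_option maxHeartbeats 1000000 in
lemma aux_key {N : ℕ} (R : ℝ) (hR : 0 < R)
    (V : ℝ → ℝ) (hVc : Continuous (deriv V)) (hVmono : StrictMono (deriv V))
    (U : Set (EuclideanSpace ℝ (Fin N))) (hU : IsOpen U)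
    (hBU : Metric.closedBall (0 : EuclideanSpace ℝ (Fin N)) R ⊆ U)
    (φ₁ φ₂ : EuclideanSpace ℝ (Fin N) → ℝ)
    (hd₁ : ContDiffOn ℝ 2 φ₁ U) (hd₂ : ContDiffOn ℝ 2 φ₂ U)
    (heq₁ : ∀ x ∈ Metric.ball (0 : EuclideanSpace ℝ (Fin N)) R,
      laplacian φ₁ x = deriv V (φ₁ x))
    (heq₂ : ∀ x ∈ Metric.ball (0 : EuclideanSpace ℝ (Fin N)) R,
      laplacian φ₂ x = deriv V (φ₂ x))
    (hbc : ∀ x : EuclideanSpace ℝ (Fin N), ‖x‖ = R →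
      fderiv ℝ φ₁ x x = fderiv ℝ φ₂ x x) :
    ∀ x ∈ Metric.closedBall (0 : EuclideanSpace ℝ (Fin N)) R, φ₁ x ≤ φ₂ x := by
  by_contra hcon
  push_neg at hcon
  obtain ⟨y, hy, hylt⟩ := hcon
  have hcBU : Metric.closedBall (0 : EuclideanSpace ℝ (Fin N)) R ⊆ U := hBU
  have hcomp : IsCompact (Metric.closedBall (0 : EuclideanSpace ℝ (Fin N)) R) :=
    isCompact_closedBall _ _
  have hwcont : ContinuousOn (fun x => φ₁ x - φ₂ x)
      (Metric.closedBall (0 : EuclideanSpace ℝ (Fin N)) R) :=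
    (hd₁.continuousOn.sub hd₂.continuousOn).mono hcBU
  obtain ⟨x₀, hx₀, hx₀max⟩ :=
    hcomp.exists_isMaxOn ⟨0, Metric.mem_closedBall_self hR.le⟩ hwcont
  obtain ⟨M, hMdef⟩ : ∃ M : ℝ, M = φ₁ x₀ - φ₂ x₀ := ⟨_, rfl⟩
  have hMpos : 0 < M := by
    have h1 : φ₁ y - φ₂ y ≤ φ₁ x₀ - φ₂ x₀ := hx₀max hy
    rw [hMdef]; linarith
  -- the compact set where φ₁ - φ₂ ≥ M/2
  obtain ⟨K, hKdef⟩ : ∃ K : Set (EuclideanSpace ℝ (Fin N)),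
      K = Metric.closedBall (0 : EuclideanSpace ℝ (Fin N)) R ∩
        (fun x => φ₁ x - φ₂ x) ⁻¹' (Ici (M/2)) := ⟨_, rfl⟩
  have hKclosed : IsClosed K := by
    rw [hKdef]
    exact hwcont.preimage_isClosed_of_isClosed Metric.isClosed_closedBall isClosed_Ici
  have hKcomp : IsCompact K :=
    hcomp.of_isClosed_subset hKclosed (by rw [hKdef]; exact inter_subset_left)
  have hKne : K.Nonempty := ⟨x₀, by
    rw [hKdef]
    refine ⟨hx₀, ?_⟩
    simp only [mem_preimage, mem_Ici]
    rw [hMdef] at hMpos ⊢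
    linarith⟩
  have hccont : ContinuousOn (fun x => deriv V (φ₁ x) - deriv V (φ₂ x)) K := by
    refine (((hVc.comp_continuousOn (hd₁.continuousOn.mono hcBU)).sub
      (hVc.comp_continuousOn (hd₂.continuousOn.mono hcBU)))).mono ?_
    rw [hKdef]; exact inter_subset_left
  obtain ⟨z, hzK, hzmin⟩ := hKcomp.exists_isMinOn hKne hccont
  obtain ⟨δ, hδdef⟩ : ∃ δ : ℝ, δ = deriv V (φ₁ z) - deriv V (φ₂ z) := ⟨_, rfl⟩
  have hδpos : 0 < δ := by
    have h3 : M / 2 ≤ φ₁ z - φ₂ z := by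
      have := hzK
      rw [hKdef] at this
      exact this.2
    have h2 : φ₂ z < φ₁ z := by linarith
    rw [hδdef]
    exact sub_pos.2 (hVmono h2)
  -- choose ε
  have hNpos : (0:ℝ) ≤ (N:ℝ) := Nat.cast_nonneg N
  obtain ⟨ε, hεpos, hεR, hεN⟩ : ∃ ε : ℝ, 0 < ε ∧ ε * R ^ 2 < M / 2 ∧ 2 * ε * (N:ℝ) < δ := by
    refine ⟨min (M / (2 * R ^ 2 + 2)) (δ / (2 * (N:ℝ) + 2)), lt_min (by positivity) (by positivity), ?_, ?_⟩
    · have h1 : min (M / (2 * R ^ 2 + 2)) (δ / (2 * (N:ℝ) + 2)) ≤ M / (2 * R ^ 2 + 2) :=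
        min_le_left _ _
      have h2 : (0:ℝ) < 2 * R ^ 2 + 2 := by positivity
      have h3 : (0:ℝ) < min (M / (2 * R ^ 2 + 2)) (δ / (2 * (N:ℝ) + 2)) :=
        lt_min (by positivity) (by positivity)
      rw [le_div_iff₀ h2] at h1
      nlinarith
    · have h1 : min (M / (2 * R ^ 2 + 2)) (δ / (2 * (N:ℝ) + 2)) ≤ δ / (2 * (N:ℝ) + 2) :=
        min_le_right _ _
      have h2 : (0:ℝ) < 2 * (N:ℝ) + 2 := by positivity
      have h3 : (0:ℝ) < min (M / (2 * R ^ 2 + 2)) (δ / (2 * (N:ℝ) + 2)) :=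
        lt_min (by positivity) (by positivity)
      rw [le_div_iff₀ h2] at h1
      nlinarith
  -- the perturbed function
  obtain ⟨ψ, hψdef⟩ : ∃ ψ : EuclideanSpace ℝ (Fin N) → ℝ,
      ψ = fun x => φ₁ x - φ₂ x - ε * ‖x‖ ^ 2 := ⟨_, rfl⟩
  have hψc2 : ContDiffOn ℝ 2 ψ U := by
    rw [hψdef]
    exact (hd₁.sub hd₂).sub ((contDiff_const.mul (contDiff_norm_sq ℝ)).contDiffOn)
  have hψcont : ContinuousOn ψ (Metric.closedBall (0 : EuclideanSpace ℝ (Fin N)) R) :=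
    hψc2.continuousOn.mono hcBU
  obtain ⟨x₁, hx₁, hx₁max⟩ :=
    hcomp.exists_isMaxOn ⟨0, Metric.mem_closedBall_self hR.le⟩ hψcont
  have hx₁U : x₁ ∈ U := hcBU hx₁
  have hx₀n : ‖x₀‖ ≤ R := by
    simpa [Metric.mem_closedBall, dist_zero_right] using hx₀
  have hψlb : M - ε * R ^ 2 ≤ ψ x₁ := by
    have h1 := hx₁max hx₀
    have h2 : ‖x₀‖ ^ 2 ≤ R ^ 2 := by nlinarith [norm_nonneg x₀]
    have h3 : M - ε * R ^ 2 ≤ ψ x₀ := by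
      rw [hψdef, hMdef]
      simp only
      nlinarith
    exact h3.trans h1
  have hwx₁ : M / 2 ≤ φ₁ x₁ - φ₂ x₁ := by
    have h1 : ψ x₁ ≤ φ₁ x₁ - φ₂ x₁ := by
      rw [hψdef]
      simp only
      nlinarith [mul_nonneg hεpos.le (sq_nonneg ‖x₁‖)]
    linarith
  -- differentiability facts
  have hdiff₁ : DifferentiableOn ℝ φ₁ U := hd₁.differentiableOn (by norm_num)
  have hdiff₂ : DifferentiableOn ℝ φ₂ U := hd₂.differentiableOn (by norm_num)
  have hψ' : ∀ x ∈ U, fderiv ℝ ψ x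
      = fderiv ℝ φ₁ x - fderiv ℝ φ₂ x - (ε * 2) • realInnerCLM x := by
    intro x hxU
    have h1 : DifferentiableAt ℝ φ₁ x := hdiff₁.differentiableAt (hU.mem_nhds hxU)
    have h2 : DifferentiableAt ℝ φ₂ x := hdiff₂.differentiableAt (hU.mem_nhds hxU)
    have h3 : HasFDerivAt (fun y : EuclideanSpace ℝ (Fin N) => ε * ‖y‖ ^ 2)
        ((ε * 2) • realInnerCLM x) x := by
      have h4 := ((hasStrictFDerivAt_norm_sq x).hasFDerivAt).const_mul ε
      have h5 : ε • ((2:ℕ) • (innerSL ℝ) x) = (ε * 2) • realInnerCLM x := by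
        rw [← Nat.cast_smul_eq_nsmul ℝ 2 ((innerSL ℝ) x), smul_smul]
        norm_num
        ext z
        rfl
      rwa [h5] at h4
    rw [hψdef]
    exact ((h1.hasFDerivAt.sub h2.hasFDerivAt).sub h3).fderiv
  have hn : ‖x₁‖ ≤ R := by
    simpa [Metric.mem_closedBall, dist_zero_right] using hx₁
  by_cases hb : ‖x₁‖ = R
  · -- boundary case
    have hψd : DifferentiableAt ℝ ψ x₁ :=
      (hψc2.differentiableOn (by norm_num)).differentiableAt (hU.mem_nhds hx₁U)
    have hcone : -x₁ ∈ posTangentConeAt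
        (Metric.closedBall (0 : EuclideanSpace ℝ (Fin N)) R) x₁ := by
      apply mem_posTangentConeAt_of_segment_subset
      rw [add_neg_cancel]
      exact (convex_closedBall _ _).segment_subset hx₁ (Metric.mem_closedBall_self hR.le)
    have hloc : IsLocalMaxOn ψ (Metric.closedBall (0 : EuclideanSpace ℝ (Fin N)) R) x₁ :=
      hx₁max.localize
    have hle := hloc.hasFDerivWithinAt_nonpos hψd.hasFDerivAt.hasFDerivWithinAt hcone
    have hval : fderiv ℝ ψ x₁ x₁ = -(ε * (2 * R ^ 2)) := by
      rw [hψ' x₁ hx₁U]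
      rw [ContinuousLinearMap.sub_apply, ContinuousLinearMap.sub_apply,
        ContinuousLinearMap.smul_apply, realInnerCLM_apply, hbc x₁ hb,
        real_inner_self_eq_norm_sq, hb]
      simp only [smul_eq_mul]
      ring
    rw [map_neg, hval] at hle
    nlinarith [mul_pos hεpos (by positivity : (0:ℝ) < 2 * R ^ 2)]
  · -- interior case
    have hx₁ball : x₁ ∈ Metric.ball (0 : EuclideanSpace ℝ (Fin N)) R := by
      simp only [Metric.mem_ball, dist_zero_right]
      exact lt_of_le_of_ne hn hb
    have hloc : IsLocalMax ψ x₁ :=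
      hx₁max.isLocalMax (Filter.mem_of_superset (Metric.isOpen_ball.mem_nhds hx₁ball)
        Metric.ball_subset_closedBall)
    have hlap : laplacian ψ x₁ ≤ 0 :=
      Finset.sum_nonpos fun i _ => aux_sdd_nonpos hU hψc2 hx₁U hloc _
    -- compute the laplacian of ψ
    have hfd1 : DifferentiableAt ℝ (fderiv ℝ φ₁) x₁ :=
      ((hd₁.fderiv_of_isOpen hU (by norm_num)).differentiableOn
        (one_ne_zero : (1 : WithTop ℕ∞) ≠ 0)).differentiableAt (hU.mem_nhds hx₁U)
    have hfd2 : DifferentiableAt ℝ (fderiv ℝ φ₂) x₁ :=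
      ((hd₂.fderiv_of_isOpen hU (by norm_num)).differentiableOn
        (one_ne_zero : (1 : WithTop ℕ∞) ≠ 0)).differentiableAt (hU.mem_nhds hx₁U)
    have hΦ : fderiv ℝ ψ =ᶠ[nhds x₁]
        fun y => fderiv ℝ φ₁ y - fderiv ℝ φ₂ y - ((ε * 2) • realInnerCLM) y := by
      filter_upwards [hU.mem_nhds hx₁U] with y hyU
      rw [hψ' y hyU, ContinuousLinearMap.smul_apply]
    have hd2nd : fderiv ℝ (fderiv ℝ ψ) x₁
        = fderiv ℝ (fderiv ℝ φ₁) x₁ - fderiv ℝ (fderiv ℝ φ₂) x₁ - (ε * 2) • realInnerCLM := by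
      rw [hΦ.fderiv_eq, fderiv_fun_sub (hfd1.fun_sub hfd2)
        ((ε * 2) • (realInnerCLM (n := N))).differentiableAt,
        fderiv_fun_sub hfd1 hfd2, ContinuousLinearMap.fderiv]
    have hsingle : ∀ i : Fin N,
        realInnerCLM (EuclideanSpace.single i (1:ℝ)) (EuclideanSpace.single i (1:ℝ)) = 1 := by
      intro i
      rw [realInnerCLM_apply, EuclideanSpace.inner_single_left]
      simp
    have hterm : ∀ i : Fin N,
        fderiv ℝ (fderiv ℝ ψ) x₁ (EuclideanSpace.single i 1) (EuclideanSpace.single i 1)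
        = fderiv ℝ (fderiv ℝ φ₁) x₁ (EuclideanSpace.single i 1) (EuclideanSpace.single i 1)
          - fderiv ℝ (fderiv ℝ φ₂) x₁ (EuclideanSpace.single i 1) (EuclideanSpace.single i 1)
          - ε * 2 := by
      intro i
      rw [hd2nd]
      rw [ContinuousLinearMap.sub_apply, ContinuousLinearMap.sub_apply,
        ContinuousLinearMap.sub_apply, ContinuousLinearMap.sub_apply,
        ContinuousLinearMap.smul_apply, ContinuousLinearMap.smul_apply, hsingle i]
      simp only [smul_eq_mul, mul_one]
    have hlapval : laplacian ψ x₁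
        = laplacian φ₁ x₁ - laplacian φ₂ x₁ - 2 * ε * (N:ℝ) := by
      unfold laplacian
      rw [Finset.sum_congr rfl (fun i _ => hterm i), Finset.sum_sub_distrib,
        Finset.sum_sub_distrib, Finset.sum_const, Finset.card_univ, Fintype.card_fin,
        nsmul_eq_mul]
      ring
    have hlapeq : laplacian φ₁ x₁ - laplacian φ₂ x₁
        = deriv V (φ₁ x₁) - deriv V (φ₂ x₁) := by
      rw [heq₁ x₁ hx₁ball, heq₂ x₁ hx₁ball]
    have hx₁K : x₁ ∈ K := by
      rw [hKdef]
      exact ⟨hx₁, hwx₁⟩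
    have hδle : δ ≤ deriv V (φ₁ x₁) - deriv V (φ₂ x₁) := by
      rw [hδdef]
      exact hzmin hx₁K
    rw [hlapval, hlapeq] at hlap
    linarith

/-- Neumann uniqueness for the scalar field toy model: two solutions of
`Δφ = V'(φ)` on a ball, for a potential with `V'' > 0`, whose outward normal
derivatives agree on the boundary sphere, agree on the closed ball. -/
theorem neumann_uniqueness_strictly_convex_potential
    {N : ℕ} (R : ℝ) (hR : 0 < R)
    (V : ℝ → ℝ) (hV : ContDiff ℝ 2 V) (hV'' : ∀ s : ℝ, 0 < deriv (deriv V) s)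
    (U : Set (EuclideanSpace ℝ (Fin N))) (hU : IsOpen U)
    (hBU : Metric.closedBall (0 : EuclideanSpace ℝ (Fin N)) R ⊆ U)
    (φ₁ φ₂ : EuclideanSpace ℝ (Fin N) → ℝ)
    (hd₁ : ContDiffOn ℝ 2 φ₁ U) (hd₂ : ContDiffOn ℝ 2 φ₂ U)
    (heq₁ : ∀ x ∈ Metric.ball (0 : EuclideanSpace ℝ (Fin N)) R,
      laplacian φ₁ x = deriv V (φ₁ x))
    (heq₂ : ∀ x ∈ Metric.ball (0 : EuclideanSpace ℝ (Fin N)) R,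
      laplacian φ₂ x = deriv V (φ₂ x))
    (hbc : ∀ x : EuclideanSpace ℝ (Fin N), ‖x‖ = R →
      fderiv ℝ φ₁ x x = fderiv ℝ φ₂ x x) :
    ∀ x ∈ Metric.closedBall (0 : EuclideanSpace ℝ (Fin N)) R, φ₁ x = φ₂ x := by
  have hV2 : ContDiff ℝ ((1:WithTop ℕ∞) + 1) V := by
    convert hV using 2
    exact one_add_one_eq_two
  have hVc : Continuous (deriv V) := (contDiff_succ_iff_deriv.mp hV2).2.2.continuous
  have hVmono : StrictMono (deriv V) := strictMono_of_deriv_pos hV''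
  intro x hx
  exact le_antisymm
    (aux_key R hR V hVc hVmono U hU hBU φ₁ φ₂ hd₁ hd₂ heq₁ heq₂ hbc x hx)
    (aux_key R hR V hVc hVmono U hU hBU φ₂ φ₁ hd₂ hd₁ heq₂ heq₁
      (fun x h => (hbc x h).symm) x hx)
end

section
/- Let n ≥ 1, let f be a real n×n positive definite matrix, and let χ ∈ ℝⁿ. Define the (n+1)×(n+1) real block matrix Φ = [[(det f)⁻¹, −(det f)⁻¹ χᵀ], [−(det f)⁻¹ χ, f + (det f)⁻¹ χχᵀ]], i.e. Φ₀₀ = (det f)⁻¹, Φ₀ᵢ = Φᵢ₀ = −(det f)⁻¹ χᵢ, and Φᵢⱼ = fᵢⱼ + (det f)⁻¹ χᵢχⱼ for 1 ≤ i, j ≤ n. Then Φ is symmetric, positive definite, and det Φ = 1. -/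
open Matrix

/-- Maison's matrix `Φ`, built from a positive definite block `f` and the twist
potentials `χ`, is symmetric, positive definite, and has determinant 1. -/
theorem maison_matrix_posDef_det_one
    {n : ℕ} (hn : 1 ≤ n)
    (f : Matrix (Fin n) (Fin n) ℝ) (hf : f.PosDef) (χ : Fin n → ℝ) :
    ∀ Φ : Matrix (Unit ⊕ Fin n) (Unit ⊕ Fin n) ℝ,
      Φ = Matrix.fromBlocks
        (Matrix.of fun _ _ => (f.det)⁻¹)
        (Matrix.of fun _ j => -(f.det)⁻¹ * χ j)
        (Matrix.of fun i _ => -(f.det)⁻¹ * χ i)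
        (Matrix.of fun i j => f i j + (f.det)⁻¹ * χ i * χ j) →
      Φ.IsSymm ∧ Φ.PosDef ∧ Φ.det = 1 := by
  intro Φ hΦ
  have hdet : 0 < f.det := hf.det_pos
  have hsymm : ∀ i j, f i j = f j i := fun i j => (congrFun (congrFun hf.1 i) j).symm
  -- congruence decomposition
  set L : Matrix (Unit ⊕ Fin n) (Unit ⊕ Fin n) ℝ :=
    Matrix.fromBlocks 1 (Matrix.of fun _ j => -χ j) 0 1 with hL
  set D : Matrix (Unit ⊕ Fin n) (Unit ⊕ Fin n) ℝ :=
    Matrix.fromBlocks (Matrix.of fun _ _ => (f.det)⁻¹) 0 0 f with hD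
  have hfac : Φ = Lᵀ * D * L := by
    subst hΦ
    ext i j
    rcases i with i | i <;> rcases j with j | j <;>
      simp [hL, hD, Matrix.mul_apply, Fintype.sum_sum_type, Matrix.fromBlocks,
        Finset.mul_sum, Finset.sum_mul, Matrix.one_apply, mul_ite, ite_mul,
        mul_comm, mul_assoc, mul_left_comm] <;> ring
  have hLdet : L.det = 1 := by
    rw [hL, Matrix.det_fromBlocks_zero₂₁]; simp
  have hDdet : D.det = 1 := by
    rw [hD, Matrix.det_fromBlocks_zero₂₁, Matrix.det_unique]
    simp [inv_mul_cancel₀ hdet.ne']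
  have hdetΦ : Φ.det = 1 := by
    rw [hfac, Matrix.det_mul, Matrix.det_mul, Matrix.det_transpose, hLdet, hDdet]
    ring
  have hDpos : D.PosDef := by
    refine Matrix.posDef_iff_dotProduct_mulVec.mpr ⟨?_, ?_⟩
    · ext i j
      rcases i with i | i <;> rcases j with j | j <;>
        simp [hD, Matrix.fromBlocks] <;> exact hsymm j i
    · intro x hx
      have hcalc : star x ⬝ᵥ D *ᵥ x
          = f.det⁻¹ * x (Sum.inl ()) ^ 2 + (x ∘ Sum.inr) ⬝ᵥ f *ᵥ (x ∘ Sum.inr) := by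
        simp [hD, dotProduct, Matrix.mulVec, Fintype.sum_sum_type,
          Matrix.fromBlocks, Finset.mul_sum]
        ring
      rw [hcalc]
      rcases eq_or_ne (x ∘ Sum.inr) 0 with h1 | h1
      · have hx0 : x (Sum.inl ()) ≠ 0 := by
          intro h0
          apply hx
          funext i
          rcases i with ⟨⟩ | i
          · exact h0
          · exact congrFun h1 i
        rw [h1]
        simp
        positivity
      · have h2 := hf.dotProduct_mulVec_pos h1
        simp only [star_trivial] at h2
        have h3 : 0 ≤ f.det⁻¹ * x (Sum.inl ()) ^ 2 := by positivity
        linarith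
  have hLinj : ∀ x : Unit ⊕ Fin n → ℝ, L *ᵥ x = 0 → x = 0 := by
    intro x h
    have hinr : ∀ i, x (Sum.inr i) = 0 := by
      intro i
      have := congrFun h (Sum.inr i)
      simpa [hL, Matrix.fromBlocks_mulVec] using this
    have hinl : x (Sum.inl ()) = 0 := by
      have := congrFun h (Sum.inl ())
      simp [hL, Matrix.fromBlocks_mulVec, Matrix.mulVec, dotProduct, hinr] at this
      exact this
    funext i
    rcases i with ⟨⟩ | i
    exacts [hinl, hinr i]
  have hDsymm : Dᵀ = D := by
    have h := hDpos.1
    rwa [Matrix.IsHermitian, Matrix.conjTranspose_eq_transpose_of_trivial] at h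
  have hΦsymm : Φ.IsSymm := by
    rw [hfac]
    unfold Matrix.IsSymm
    rw [Matrix.transpose_mul, Matrix.transpose_mul, Matrix.transpose_transpose,
      hDsymm, Matrix.mul_assoc]
  refine ⟨hΦsymm, Matrix.posDef_iff_dotProduct_mulVec.mpr ⟨?_, ?_⟩, hdetΦ⟩
  · rw [Matrix.IsHermitian, Matrix.conjTranspose_eq_transpose_of_trivial]
    exact hΦsymm
  · intro x hx
    have hLx : L *ᵥ x ≠ 0 := fun h => hx (hLinj x h)
    have := hDpos.dotProduct_mulVec_pos hLx
    rw [hfac]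
    calc 0 < star (L *ᵥ x) ⬝ᵥ D *ᵥ (L *ᵥ x) := this
      _ = star x ⬝ᵥ (Lᵀ * D * L) *ᵥ x := by
        simp only [star_trivial, ← Matrix.mulVec_mulVec, Matrix.dotProduct_mulVec,
          Matrix.vecMul_transpose]
end

section
/- Let n ≥ 1 and let H = {(r,z) ∈ ℝ² : r > 0}. Suppose Φ₀, Φ₁ : ℝ² → M_n(ℝ) are matrix-valued functions whose entries are twice continuously differentiable on H, such that Φ₀(r,z) and Φ₁(r,z) are symmetric positive definite for every (r,z) ∈ H, and each Φ = Φ₀, Φ₁ satisfies the reduced sigma-model field equation ∂_r( r·Φ⁻¹ ∂_r Φ ) + ∂_z( r·Φ⁻¹ ∂_z Φ ) = 0 on H (an equality of matrix-valued functions, where ∂_r, ∂_z denote partial derivatives taken entrywise). Then the scalar function σ(r,z) = Tr( Φ₀(r,z)⁻¹ Φ₁(r,z) ) satisfies the subharmonicity inequality ∂²_r σ + (1/r) ∂_r σ + ∂²_z σ ≥ 0 at every point of H. (This is the content of the Mazur identity used in the uniqueness theorem for rotating black holes.) -/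
open Matrix

/-- Partial derivative in the first (`r`) coordinate. -/
noncomputable def pdR (F : ℝ × ℝ → ℝ) (p : ℝ × ℝ) : ℝ :=
  fderiv ℝ F p (1, 0)

/-- Partial derivative in the second (`z`) coordinate. -/
noncomputable def pdZ (F : ℝ × ℝ → ℝ) (p : ℝ × ℝ) : ℝ :=
  fderiv ℝ F p (0, 1)

/-- Entrywise partial derivative in `r` of a matrix-valued function. -/
noncomputable def mpdR {n : ℕ} (Φ : ℝ × ℝ → Matrix (Fin n) (Fin n) ℝ)
    (p : ℝ × ℝ) : Matrix (Fin n) (Fin n) ℝ :=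
  Matrix.of fun i j => pdR (fun q => Φ q i j) p

/-- Entrywise partial derivative in `z` of a matrix-valued function. -/
noncomputable def mpdZ {n : ℕ} (Φ : ℝ × ℝ → Matrix (Fin n) (Fin n) ℝ)
    (p : ℝ × ℝ) : Matrix (Fin n) (Fin n) ℝ :=
  Matrix.of fun i j => pdZ (fun q => Φ q i j) p

/-- The reduced sigma-model field equation
`∂_r(r Φ⁻¹ ∂_r Φ) + ∂_z(r Φ⁻¹ ∂_z Φ) = 0` on the upper half-plane `{r > 0}`. -/
def SatisfiesSigmaModelEq {n : ℕ} (Φ : ℝ × ℝ → Matrix (Fin n) (Fin n) ℝ) : Prop :=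
  ∀ p : ℝ × ℝ, 0 < p.1 →
    mpdR (fun q => q.1 • ((Φ q)⁻¹ * mpdR Φ q)) p +
      mpdZ (fun q => q.1 • ((Φ q)⁻¹ * mpdZ Φ q)) p = 0

namespace MazurAux

attribute [local instance] Matrix.linftyOpNormedRing Matrix.linftyOpNormedAlgebra

variable {n : ℕ}

local notation "M" => Matrix (Fin n) (Fin n) ℝ

/-- The open upper half plane. -/
def U : Set (ℝ × ℝ) := {p : ℝ × ℝ | 0 < p.1}

lemma isOpen_U : IsOpen U := isOpen_lt continuous_const continuous_fst

noncomputable def entryCLM (i j : Fin n) : M →L[ℝ] ℝ :=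
  LinearMap.toContinuousLinearMap (Matrix.entryLinearMap ℝ ℝ i j)

noncomputable def ofCLE : ((Fin n) → (Fin n) → ℝ) ≃L[ℝ] M :=
  (Matrix.ofLinearEquiv ℝ).toContinuousLinearEquiv

lemma fderiv_entry {F : ℝ × ℝ → M} {q : ℝ × ℝ} (hF : DifferentiableAt ℝ F q)
    (i j : Fin n) (v : ℝ × ℝ) :
    fderiv ℝ (fun q => F q i j) q v = fderiv ℝ F q v i j := by
  have h : fderiv ℝ (fun q => entryCLM i j (F q)) q
      = (entryCLM i j).comp (fderiv ℝ F q) :=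
    ((entryCLM i j).hasFDerivAt.comp q hF.hasFDerivAt).fderiv
  have : (fun q => F q i j) = fun q => entryCLM i j (F q) := rfl
  rw [this, h]; rfl

lemma mpdR_eq {F : ℝ × ℝ → M} {q : ℝ × ℝ} (hF : DifferentiableAt ℝ F q) :
    mpdR F q = fderiv ℝ F q (1, 0) := by
  ext i j
  simpa [mpdR, pdR] using fderiv_entry hF i j (1, 0)

lemma mpdZ_eq {F : ℝ × ℝ → M} {q : ℝ × ℝ} (hF : DifferentiableAt ℝ F q) :
    mpdZ F q = fderiv ℝ F q (0, 1) := by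
  ext i j
  simpa [mpdZ, pdZ] using fderiv_entry hF i j (0, 1)

lemma contDiffOn_of_entries {F : ℝ × ℝ → M} {k : WithTop ℕ∞}
    (h : ∀ i j, ContDiffOn ℝ k (fun q => F q i j) U) :
    ContDiffOn ℝ k F U := by
  have : F = fun q => ofCLE (fun i j => F q i j) := rfl
  rw [this]
  rw [show (fun q => ofCLE (n := n) (fun i j => F q i j))
      = (ofCLE (n := n)) ∘ (fun q (i j : Fin n) => F q i j) from rfl]
  refine (ofCLE (n := n)).contDiff.comp_contDiffOn ?_
  exact contDiffOn_pi.2 fun i => contDiffOn_pi.2 fun j => h i j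

/-- matrix inverse is smooth along a smooth family of invertible matrices -/
lemma contDiffOn_inv_matrix {F : ℝ × ℝ → M} {k : WithTop ℕ∞}
    (hF : ContDiffOn ℝ k F U)
    (hu : ∀ q ∈ U, IsUnit (F q)) :
    ContDiffOn ℝ k (fun q => (F q)⁻¹) U := by
  have : (fun q => (F q)⁻¹) = fun q => Ring.inverse (F q) := by
    funext q; rw [Matrix.nonsing_inv_eq_ringInverse]
  rw [this]
  intro q hq
  exact ((contDiffAt_ringInverse ℝ (hu q hq).unit).comp_contDiffWithinAt q
    (by simpa [(hu q hq).unit_spec] using hF q hq))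

lemma fderiv_matrix_inv {F : ℝ × ℝ → M} {q : ℝ × ℝ}
    (hF : DifferentiableAt ℝ F q) (hu : IsUnit (F q)) (v : ℝ × ℝ) :
    fderiv ℝ (fun q => (F q)⁻¹) q v = -((F q)⁻¹ * fderiv ℝ F q v * (F q)⁻¹) := by
  have hEq : (fun q => (F q)⁻¹) = fun q => Ring.inverse (F q) := by
    funext q; rw [Matrix.nonsing_inv_eq_ringInverse]
  have h := ((hasFDerivAt_ringInverse (𝕜 := ℝ) hu.unit).comp q
    (by exact hF.hasFDerivAt)).fderiv
  rw [hEq]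
  erw [show (fun q => Ring.inverse (F q)) = Ring.inverse ∘ F from rfl, h]
  simp [ContinuousLinearMap.mulLeftRight_apply, ← Matrix.coe_units_inv, hu.unit_spec,
    Matrix.nonsing_inv_eq_ringInverse, ← Ring.inverse_unit hu.unit, hu.unit_spec]
  rfl

lemma fderiv_matrix_mul {f g : ℝ × ℝ → M} {q : ℝ × ℝ}
    (hf : DifferentiableAt ℝ f q) (hg : DifferentiableAt ℝ g q) (v : ℝ × ℝ) :
    fderiv ℝ (fun q => f q * g q) q v = f q * fderiv ℝ g q v + fderiv ℝ f q v * g q := by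
  erw [(hf.hasFDerivAt.fun_mul' hg.hasFDerivAt).fderiv]
  rfl

lemma fderiv_smul_fst {f : ℝ × ℝ → M} {q : ℝ × ℝ}
    (hf : DifferentiableAt ℝ f q) (v : ℝ × ℝ) :
    fderiv ℝ (fun q => q.1 • f q) q v = q.1 • fderiv ℝ f q v + v.1 • f q := by
  erw [((differentiableAt_fst (𝕜 := ℝ)).hasFDerivAt.fun_smul hf.hasFDerivAt).fderiv]
  erw [fderiv_fst]
  rfl

lemma fderiv_trace {f : ℝ × ℝ → M} {q : ℝ × ℝ}
    (hf : DifferentiableAt ℝ f q) (v : ℝ × ℝ) :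
    fderiv ℝ (fun q => Matrix.trace (f q)) q v = Matrix.trace (fderiv ℝ f q v) := by
  have tl : (fun q => Matrix.trace (f q))
      = fun q => (LinearMap.toContinuousLinearMap
        (Matrix.traceLinearMap (Fin n) ℝ ℝ)) (f q) := rfl
  have h := ((LinearMap.toContinuousLinearMap
      (Matrix.traceLinearMap (Fin n) ℝ ℝ)).hasFDerivAt.comp q hf.hasFDerivAt).fderiv
  rw [tl, show (fun q => (LinearMap.toContinuousLinearMap
    (Matrix.traceLinearMap (Fin n) ℝ ℝ)) (f q))
      = ⇑(LinearMap.toContinuousLinearMap (Matrix.traceLinearMap (Fin n) ℝ ℝ)) ∘ f from rfl, h]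
  rfl

/-- differentiability at interior points from `ContDiffOn`. -/
lemma diffAt {E : Type*} [NormedAddCommGroup E] [NormedSpace ℝ E]
    {G : ℝ × ℝ → E} {k : WithTop ℕ∞} (hk : 1 ≤ k) (h : ContDiffOn ℝ k G U)
    {q : ℝ × ℝ} (hq : q ∈ U) : DifferentiableAt ℝ G q :=
  (h.differentiableOn (zero_lt_one.trans_le hk).ne').differentiableAt (isOpen_U.mem_nhds hq)

/-- the directional derivative of a `C²` family is `C¹`. -/
lemma contDiffOn_der {E : Type*} [NormedAddCommGroup E] [NormedSpace ℝ E]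
    {G : ℝ × ℝ → E} (h : ContDiffOn ℝ 2 G U) (v : ℝ × ℝ) :
    ContDiffOn ℝ 1 (fun q => fderiv ℝ G q v) U := by
  have h' : ContDiffOn ℝ 1 (fderiv ℝ G) U :=
    h.fderiv_of_isOpen isOpen_U (by norm_num)
  exact (ContinuousLinearMap.apply ℝ E v).contDiff.comp_contDiffOn h'

lemma fderiv_congr_U {E : Type*} [NormedAddCommGroup E] [NormedSpace ℝ E]
    {f g : ℝ × ℝ → E} (h : ∀ q ∈ U, f q = g q) {p : ℝ × ℝ} (hp : p ∈ U) :
    fderiv ℝ f p = fderiv ℝ g p :=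
  Filter.EventuallyEq.fderiv_eq (Filter.eventuallyEq_of_mem (isOpen_U.mem_nhds hp) h)

lemma mpdR_congr_U {F G : ℝ × ℝ → M} (h : ∀ q ∈ U, F q = G q) {p : ℝ × ℝ} (hp : p ∈ U) :
    mpdR F p = mpdR G p := by
  ext i j
  simp only [mpdR, pdR, Matrix.of_apply]
  rw [fderiv_congr_U (f := fun q => F q i j) (g := fun q => G q i j)
    (fun q hq => show F q i j = G q i j by rw [h q hq]) hp]

lemma mpdZ_congr_U {F G : ℝ × ℝ → M} (h : ∀ q ∈ U, F q = G q) {p : ℝ × ℝ} (hp : p ∈ U) :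
    mpdZ F p = mpdZ G p := by
  ext i j
  simp only [mpdZ, pdZ, Matrix.of_apply]
  rw [fderiv_congr_U (f := fun q => F q i j) (g := fun q => G q i j)
    (fun q hq => show F q i j = G q i j by rw [h q hq]) hp]

/-- a derivative of a family of symmetric matrices is symmetric. -/
lemma fderiv_transpose_symm {F : ℝ × ℝ → M} {p : ℝ × ℝ}
    (hF : DifferentiableAt ℝ F p) (hsym : ∀ q ∈ U, (F q)ᵀ = F q)
    (hp : p ∈ U) (v : ℝ × ℝ) :
    (fderiv ℝ F p v)ᵀ = fderiv ℝ F p v := by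
  ext i j
  rw [Matrix.transpose_apply, ← fderiv_entry hF i j v, ← fderiv_entry hF j i v]
  have he : (fun q => F q j i) =ᶠ[nhds p] (fun q => F q i j) :=
    Filter.eventuallyEq_of_mem (isOpen_U.mem_nhds hp)
      (fun q hq => by simpa using congrFun (congrFun (hsym q hq) i) j)
  rw [he.fderiv_eq]

lemma trace_nonneg_of_posSemidef {P : M} (hP : P.PosSemidef) :
    0 ≤ P.trace := by
  rw [Matrix.trace]
  apply Finset.sum_nonneg
  intro i _
  exact hP.diag_nonneg

lemma conjTranspose_eq_transpose_real (A : M) : Aᴴ = Aᵀ := by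
  ext i j; simp [Matrix.conjTranspose_apply]

lemma trace_quad_nonneg {a b : M}
    (ha : a.PosSemidef) (hb : b.PosSemidef) (k : M) :
    0 ≤ (a * kᵀ * b * k).trace := by
  obtain ⟨c, rfl⟩ : ∃ c : M, a = cᴴ * c := by
    refine ⟨diagonal (fun i => Real.sqrt (ha.1.eigenvalues i)) *
      (star (ha.1.eigenvectorUnitary : M)), ?_⟩
    conv_lhs => rw [ha.1.spectral_theorem, Unitary.conjStarAlgAut_apply]
    rw [conjTranspose_mul, diagonal_conjTranspose, ← star_eq_conjTranspose, star_star]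
    simp only [mul_assoc]
    rw [← mul_assoc (diagonal _) (diagonal _), diagonal_mul_diagonal]
    congr 3
    funext i
    simp [Real.mul_self_sqrt (ha.eigenvalues_nonneg i)]
  have h1 : (cᴴ * c * kᵀ * b * k).trace = (c * kᵀ * b * k * cᴴ).trace := by
    rw [show cᴴ * c * kᵀ * b * k = cᴴ * (c * kᵀ * b * k) by noncomm_ring,
      Matrix.trace_mul_comm]
  rw [h1]
  have h2 : PosSemidef (c * (kᴴ * b * k) * cᴴ) :=
    (hb.conjTranspose_mul_mul_same k).mul_mul_conjTranspose_same c
  have h3 : c * kᵀ * b * k * cᴴ = c * (kᴴ * b * k) * cᴴ := by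
    rw [conjTranspose_eq_transpose_real k]; noncomm_ring
  rw [h3]
  exact trace_nonneg_of_posSemidef h2

lemma trace_current (ai b bi ar br : M) (hBBi : b * bi = 1) (r : ℝ) :
    r * Matrix.trace (ai * br + -(ai * ar * ai) * b)
      = Matrix.trace ((ai * b) * (r • (bi * br) - r • (ai * ar))) := by
  have h1 : (ai * b) * (bi * br) = ai * br := by
    rw [mul_assoc ai b (bi * br), ← mul_assoc b bi br, hBBi, one_mul]
  have h2 : Matrix.trace ((ai * b) * (ai * ar)) = Matrix.trace (ai * ar * ai * b) := by
    rw [Matrix.trace_mul_comm]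
    congr 1
    noncomm_ring
  rw [mul_sub, Matrix.mul_smul, Matrix.mul_smul, Matrix.trace_sub, Matrix.trace_smul,
    Matrix.trace_smul, h1, h2, Matrix.trace_add]
  simp [mul_sub, Matrix.trace_neg]
  ring

lemma Xr_eq (ai b bi ar br : M) (hBiB : bi * b = 1)
    (hai : aiᵀ = ai) (hbi : biᵀ = bi) (har : arᵀ = ar) (hbr : brᵀ = br) :
    ai * br + -(ai * ar * ai) * b = ai * (bi * br - ai * ar)ᵀ * b := by
  rw [Matrix.transpose_sub, Matrix.transpose_mul, Matrix.transpose_mul, hai, hbi, har, hbr]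
  have h1 : ai * (br * bi - ar * ai) * b = ai * br * (bi * b) - ai * ar * (ai * b) := by
    noncomm_ring
  rw [h1, hBiB, mul_one]
  noncomm_ring

end MazurAux

attribute [local instance] Matrix.linftyOpNormedRing Matrix.linftyOpNormedAlgebra

open MazurAux in
/-- The Mazur identity: for two symmetric positive definite solutions `Φ₀, Φ₁`
of the reduced sigma-model equation on the upper half-plane, the function
`σ = Tr(Φ₀⁻¹ Φ₁)` satisfies `∂²_r σ + (1/r) ∂_r σ + ∂²_z σ ≥ 0` there. -/
theorem mazur_identity_subharmonic
    {n : ℕ} (hn : 1 ≤ n)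
    (Φ₀ Φ₁ : ℝ × ℝ → Matrix (Fin n) (Fin n) ℝ)
    (hreg₀ : ∀ i j : Fin n, ContDiffOn ℝ 2 (fun q => Φ₀ q i j) {p : ℝ × ℝ | 0 < p.1})
    (hreg₁ : ∀ i j : Fin n, ContDiffOn ℝ 2 (fun q => Φ₁ q i j) {p : ℝ × ℝ | 0 < p.1})
    (hpos₀ : ∀ p : ℝ × ℝ, 0 < p.1 → (Φ₀ p).PosDef)
    (hpos₁ : ∀ p : ℝ × ℝ, 0 < p.1 → (Φ₁ p).PosDef)
    (heq₀ : SatisfiesSigmaModelEq Φ₀)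
    (heq₁ : SatisfiesSigmaModelEq Φ₁) :
    ∀ p : ℝ × ℝ, 0 < p.1 →
      0 ≤ pdR (pdR fun q => Matrix.trace ((Φ₀ q)⁻¹ * Φ₁ q)) p +
          (1 / p.1) * pdR (fun q => Matrix.trace ((Φ₀ q)⁻¹ * Φ₁ q)) p +
          pdZ (pdZ fun q => Matrix.trace ((Φ₀ q)⁻¹ * Φ₁ q)) p := by
  intro p hp
  classical
  have hpU : p ∈ U := hp
  have ole2 : (1 : WithTop ℕ∞) ≤ 2 := by norm_num
  -- regularity
  have hA2 : ContDiffOn ℝ 2 Φ₀ U := contDiffOn_of_entries hreg₀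
  have hB2 : ContDiffOn ℝ 2 Φ₁ U := contDiffOn_of_entries hreg₁
  have huA : ∀ q ∈ U, IsUnit (Φ₀ q) := fun q hq => (hpos₀ q hq).isUnit
  have huB : ∀ q ∈ U, IsUnit (Φ₁ q) := fun q hq => (hpos₁ q hq).isUnit
  have hAi2 : ContDiffOn ℝ 2 (fun q => (Φ₀ q)⁻¹) U := contDiffOn_inv_matrix hA2 huA
  have hBi2 : ContDiffOn ℝ 2 (fun q => (Φ₁ q)⁻¹) U := contDiffOn_inv_matrix hB2 huB
  have hAr1 := contDiffOn_der hA2 (1, 0)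
  have hAz1 := contDiffOn_der hA2 (0, 1)
  have hBr1 := contDiffOn_der hB2 (1, 0)
  have hBz1 := contDiffOn_der hB2 (0, 1)
  -- differentiability at points of U
  have dA : ∀ q ∈ U, DifferentiableAt ℝ Φ₀ q := fun q hq => diffAt ole2 hA2 hq
  have dB : ∀ q ∈ U, DifferentiableAt ℝ Φ₁ q := fun q hq => diffAt ole2 hB2 hq
  have dAi : ∀ q ∈ U, DifferentiableAt ℝ (fun q => (Φ₀ q)⁻¹) q :=
    fun q hq => diffAt ole2 hAi2 hq
  have dBi : ∀ q ∈ U, DifferentiableAt ℝ (fun q => (Φ₁ q)⁻¹) q :=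
    fun q hq => diffAt ole2 hBi2 hq
  have dAr : ∀ q ∈ U, DifferentiableAt ℝ (fun q => fderiv ℝ Φ₀ q (1, 0)) q :=
    fun q hq => diffAt le_rfl hAr1 hq
  have dAz : ∀ q ∈ U, DifferentiableAt ℝ (fun q => fderiv ℝ Φ₀ q (0, 1)) q :=
    fun q hq => diffAt le_rfl hAz1 hq
  have dBr : ∀ q ∈ U, DifferentiableAt ℝ (fun q => fderiv ℝ Φ₁ q (1, 0)) q :=
    fun q hq => diffAt le_rfl hBr1 hq
  have dBz : ∀ q ∈ U, DifferentiableAt ℝ (fun q => fderiv ℝ Φ₁ q (0, 1)) q :=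
    fun q hq => diffAt le_rfl hBz1 hq
  -- current functions
  have dJAr : ∀ q ∈ U, DifferentiableAt ℝ
      (fun q => q.1 • ((Φ₀ q)⁻¹ * fderiv ℝ Φ₀ q (1, 0))) q :=
    fun q hq => differentiableAt_fst.smul ((dAi q hq).mul (dAr q hq))
  have dJAz : ∀ q ∈ U, DifferentiableAt ℝ
      (fun q => q.1 • ((Φ₀ q)⁻¹ * fderiv ℝ Φ₀ q (0, 1))) q :=
    fun q hq => differentiableAt_fst.smul ((dAi q hq).mul (dAz q hq))
  have dJBr : ∀ q ∈ U, DifferentiableAt ℝ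
      (fun q => q.1 • ((Φ₁ q)⁻¹ * fderiv ℝ Φ₁ q (1, 0))) q :=
    fun q hq => differentiableAt_fst.smul ((dBi q hq).mul (dBr q hq))
  have dJBz : ∀ q ∈ U, DifferentiableAt ℝ
      (fun q => q.1 • ((Φ₁ q)⁻¹ * fderiv ℝ Φ₁ q (0, 1))) q :=
    fun q hq => differentiableAt_fst.smul ((dBi q hq).mul (dBz q hq))
  have dKR : ∀ q ∈ U, DifferentiableAt ℝ
      (fun q => q.1 • ((Φ₁ q)⁻¹ * fderiv ℝ Φ₁ q (1, 0))
        - q.1 • ((Φ₀ q)⁻¹ * fderiv ℝ Φ₀ q (1, 0))) q :=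
    fun q hq => (dJBr q hq).sub (dJAr q hq)
  have dKZ : ∀ q ∈ U, DifferentiableAt ℝ
      (fun q => q.1 • ((Φ₁ q)⁻¹ * fderiv ℝ Φ₁ q (0, 1))
        - q.1 • ((Φ₀ q)⁻¹ * fderiv ℝ Φ₀ q (0, 1))) q :=
    fun q hq => (dJBz q hq).sub (dJAz q hq)
  have dX : ∀ q ∈ U, DifferentiableAt ℝ (fun q => (Φ₀ q)⁻¹ * Φ₁ q) q :=
    fun q hq => (dAi q hq).mul (dB q hq)
  -- σ regularity
  have hX2 : ContDiffOn ℝ 2 (fun q => (Φ₀ q)⁻¹ * Φ₁ q) U := hAi2.mul hB2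
  have hσ2 : ContDiffOn ℝ 2 (fun q => Matrix.trace ((Φ₀ q)⁻¹ * Φ₁ q)) U :=
    (LinearMap.toContinuousLinearMap
      (Matrix.traceLinearMap (Fin n) ℝ ℝ)).contDiff.comp_contDiffOn hX2
  have hσr1 := contDiffOn_der hσ2 (1, 0)
  have hσz1 := contDiffOn_der hσ2 (0, 1)
  have dσr : DifferentiableAt ℝ (pdR (fun q => Matrix.trace ((Φ₀ q)⁻¹ * Φ₁ q))) p :=
    diffAt le_rfl hσr1 hpU
  have dσz : DifferentiableAt ℝ (pdZ (fun q => Matrix.trace ((Φ₀ q)⁻¹ * Φ₁ q))) p :=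
    diffAt le_rfl hσz1 hpU
  -- Step B : on U, r ∂σ = tr(X * K)
  have hEqR : ∀ q ∈ U, q.1 * pdR (fun q => Matrix.trace ((Φ₀ q)⁻¹ * Φ₁ q)) q
      = Matrix.trace (((Φ₀ q)⁻¹ * Φ₁ q) *
          (q.1 • ((Φ₁ q)⁻¹ * fderiv ℝ Φ₁ q (1, 0))
            - q.1 • ((Φ₀ q)⁻¹ * fderiv ℝ Φ₀ q (1, 0)))) := by
    intro q hq
    have hBBi : Φ₁ q * (Φ₁ q)⁻¹ = 1 :=
      Matrix.mul_nonsing_inv _ ((Matrix.isUnit_iff_isUnit_det _).mp (huB q hq))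
    have e1 : pdR (fun q => Matrix.trace ((Φ₀ q)⁻¹ * Φ₁ q)) q
        = Matrix.trace (fderiv ℝ (fun q => (Φ₀ q)⁻¹ * Φ₁ q) q (1, 0)) :=
      fderiv_trace (dX q hq) (1, 0)
    have e2 : fderiv ℝ (fun q => (Φ₀ q)⁻¹ * Φ₁ q) q (1, 0)
        = (Φ₀ q)⁻¹ * fderiv ℝ Φ₁ q (1, 0)
          + fderiv ℝ (fun q => (Φ₀ q)⁻¹) q (1, 0) * Φ₁ q :=
      fderiv_matrix_mul (dAi q hq) (dB q hq) (1, 0)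
    have e3 : fderiv ℝ (fun q => (Φ₀ q)⁻¹) q (1, 0)
        = -((Φ₀ q)⁻¹ * fderiv ℝ Φ₀ q (1, 0) * (Φ₀ q)⁻¹) :=
      fderiv_matrix_inv (dA q hq) (huA q hq) (1, 0)
    rw [e1, e2, e3]
    exact trace_current ((Φ₀ q)⁻¹) (Φ₁ q) ((Φ₁ q)⁻¹)
      (fderiv ℝ Φ₀ q (1, 0)) (fderiv ℝ Φ₁ q (1, 0)) hBBi q.1
  have hEqZ : ∀ q ∈ U, q.1 * pdZ (fun q => Matrix.trace ((Φ₀ q)⁻¹ * Φ₁ q)) q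
      = Matrix.trace (((Φ₀ q)⁻¹ * Φ₁ q) *
          (q.1 • ((Φ₁ q)⁻¹ * fderiv ℝ Φ₁ q (0, 1))
            - q.1 • ((Φ₀ q)⁻¹ * fderiv ℝ Φ₀ q (0, 1)))) := by
    intro q hq
    have hBBi : Φ₁ q * (Φ₁ q)⁻¹ = 1 :=
      Matrix.mul_nonsing_inv _ ((Matrix.isUnit_iff_isUnit_det _).mp (huB q hq))
    have e1 : pdZ (fun q => Matrix.trace ((Φ₀ q)⁻¹ * Φ₁ q)) q
        = Matrix.trace (fderiv ℝ (fun q => (Φ₀ q)⁻¹ * Φ₁ q) q (0, 1)) :=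
      fderiv_trace (dX q hq) (0, 1)
    have e2 : fderiv ℝ (fun q => (Φ₀ q)⁻¹ * Φ₁ q) q (0, 1)
        = (Φ₀ q)⁻¹ * fderiv ℝ Φ₁ q (0, 1)
          + fderiv ℝ (fun q => (Φ₀ q)⁻¹) q (0, 1) * Φ₁ q :=
      fderiv_matrix_mul (dAi q hq) (dB q hq) (0, 1)
    have e3 : fderiv ℝ (fun q => (Φ₀ q)⁻¹) q (0, 1)
        = -((Φ₀ q)⁻¹ * fderiv ℝ Φ₀ q (0, 1) * (Φ₀ q)⁻¹) :=
      fderiv_matrix_inv (dA q hq) (huA q hq) (0, 1)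
    rw [e1, e2, e3]
    exact trace_current ((Φ₀ q)⁻¹) (Φ₁ q) ((Φ₁ q)⁻¹)
      (fderiv ℝ Φ₀ q (0, 1)) (fderiv ℝ Φ₁ q (0, 1)) hBBi q.1
  -- Step C : replace r·∂σ by its trace form before differentiating again
  have hTRc : fderiv ℝ (fun q => q.1 * pdR (fun q => Matrix.trace ((Φ₀ q)⁻¹ * Φ₁ q)) q) p
      = fderiv ℝ (fun q => Matrix.trace (((Φ₀ q)⁻¹ * Φ₁ q) *
          (q.1 • ((Φ₁ q)⁻¹ * fderiv ℝ Φ₁ q (1, 0))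
            - q.1 • ((Φ₀ q)⁻¹ * fderiv ℝ Φ₀ q (1, 0))))) p :=
    fderiv_congr_U hEqR hpU
  have hTZc : fderiv ℝ (fun q => q.1 * pdZ (fun q => Matrix.trace ((Φ₀ q)⁻¹ * Φ₁ q)) q) p
      = fderiv ℝ (fun q => Matrix.trace (((Φ₀ q)⁻¹ * Φ₁ q) *
          (q.1 • ((Φ₁ q)⁻¹ * fderiv ℝ Φ₁ q (0, 1))
            - q.1 • ((Φ₀ q)⁻¹ * fderiv ℝ Φ₀ q (0, 1))))) p :=
    fderiv_congr_U hEqZ hpU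
  -- Step A : product rule on the left-hand sides
  have eA1 : fderiv ℝ (fun q => q.1 * pdR (fun q => Matrix.trace ((Φ₀ q)⁻¹ * Φ₁ q)) q) p (1, 0)
      = p.1 * pdR (pdR (fun q => Matrix.trace ((Φ₀ q)⁻¹ * Φ₁ q))) p
        + pdR (fun q => Matrix.trace ((Φ₀ q)⁻¹ * Φ₁ q)) p := by
    rw [fderiv_fun_mul differentiableAt_fst dσr]
    simp [fderiv_fst, pdR]
  have eA2 : fderiv ℝ (fun q => q.1 * pdZ (fun q => Matrix.trace ((Φ₀ q)⁻¹ * Φ₁ q)) q) p (0, 1)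
      = p.1 * pdZ (pdZ (fun q => Matrix.trace ((Φ₀ q)⁻¹ * Φ₁ q))) p := by
    rw [fderiv_fun_mul differentiableAt_fst dσz]
    simp [fderiv_fst, pdZ]
  -- PDE at p
  have hPDEA : fderiv ℝ (fun q => q.1 • ((Φ₀ q)⁻¹ * fderiv ℝ Φ₀ q (1, 0))) p (1, 0)
      + fderiv ℝ (fun q => q.1 • ((Φ₀ q)⁻¹ * fderiv ℝ Φ₀ q (0, 1))) p (0, 1) = 0 := by
    have h0 := heq₀ p hp
    rw [mpdR_congr_U (G := fun q => q.1 • ((Φ₀ q)⁻¹ * fderiv ℝ Φ₀ q (1, 0)))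
        (fun q hq => by rw [mpdR_eq (dA q hq)]) hpU,
      mpdZ_congr_U (G := fun q => q.1 • ((Φ₀ q)⁻¹ * fderiv ℝ Φ₀ q (0, 1)))
        (fun q hq => by rw [mpdZ_eq (dA q hq)]) hpU,
      mpdR_eq (dJAr p hpU), mpdZ_eq (dJAz p hpU)] at h0
    exact h0
  have hPDEB : fderiv ℝ (fun q => q.1 • ((Φ₁ q)⁻¹ * fderiv ℝ Φ₁ q (1, 0))) p (1, 0)
      + fderiv ℝ (fun q => q.1 • ((Φ₁ q)⁻¹ * fderiv ℝ Φ₁ q (0, 1))) p (0, 1) = 0 := by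
    have h0 := heq₁ p hp
    rw [mpdR_congr_U (G := fun q => q.1 • ((Φ₁ q)⁻¹ * fderiv ℝ Φ₁ q (1, 0)))
        (fun q hq => by rw [mpdR_eq (dB q hq)]) hpU,
      mpdZ_congr_U (G := fun q => q.1 • ((Φ₁ q)⁻¹ * fderiv ℝ Φ₁ q (0, 1)))
        (fun q hq => by rw [mpdZ_eq (dB q hq)]) hpU,
      mpdR_eq (dJBr p hpU), mpdZ_eq (dJBz p hpU)] at h0
    exact h0
  have hKsum : fderiv ℝ (fun q => q.1 • ((Φ₁ q)⁻¹ * fderiv ℝ Φ₁ q (1, 0))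
        - q.1 • ((Φ₀ q)⁻¹ * fderiv ℝ Φ₀ q (1, 0))) p (1, 0)
      + fderiv ℝ (fun q => q.1 • ((Φ₁ q)⁻¹ * fderiv ℝ Φ₁ q (0, 1))
        - q.1 • ((Φ₀ q)⁻¹ * fderiv ℝ Φ₀ q (0, 1))) p (0, 1) = 0 := by
    erw [fderiv_fun_sub (dJBr p hpU) (dJAr p hpU), fderiv_fun_sub (dJBz p hpU) (dJAz p hpU)]
    have := (show ∀ a b c d : Matrix (Fin n) (Fin n) ℝ, a + c = 0 → b + d = 0 →
        a - b + (c - d) = 0 from fun a b c d h1 h2 => by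
      rw [show a - b + (c - d) = a + c - (b + d) by abel, h1, h2, sub_zero]) _ _ _ _ hPDEB hPDEA
    exact this
  -- symmetry facts at p
  have hsymA : ∀ q ∈ U, (Φ₀ q)ᵀ = Φ₀ q := fun q hq => by
    rw [← conjTranspose_eq_transpose_real]; exact (hpos₀ q hq).isHermitian
  have hsymB : ∀ q ∈ U, (Φ₁ q)ᵀ = Φ₁ q := fun q hq => by
    rw [← conjTranspose_eq_transpose_real]; exact (hpos₁ q hq).isHermitian
  have hAiT : ((Φ₀ p)⁻¹)ᵀ = (Φ₀ p)⁻¹ := by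
    rw [← conjTranspose_eq_transpose_real]; exact ((hpos₀ p hp).inv).isHermitian
  have hBiT : ((Φ₁ p)⁻¹)ᵀ = (Φ₁ p)⁻¹ := by
    rw [← conjTranspose_eq_transpose_real]; exact ((hpos₁ p hp).inv).isHermitian
  have hArT := fderiv_transpose_symm (dA p hpU) hsymA hpU (1, 0)
  have hAzT := fderiv_transpose_symm (dA p hpU) hsymA hpU (0, 1)
  have hBrT := fderiv_transpose_symm (dB p hpU) hsymB hpU (1, 0)
  have hBzT := fderiv_transpose_symm (dB p hpU) hsymB hpU (0, 1)
  have hBiB : (Φ₁ p)⁻¹ * Φ₁ p = 1 :=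
    Matrix.nonsing_inv_mul _ ((Matrix.isUnit_iff_isUnit_det _).mp (huB p hpU))
  -- derivative of X at p
  have hXv : ∀ v : ℝ × ℝ, fderiv ℝ (fun q => (Φ₀ q)⁻¹ * Φ₁ q) p v
      = (Φ₀ p)⁻¹ * fderiv ℝ Φ₁ p v
        + -((Φ₀ p)⁻¹ * fderiv ℝ Φ₀ p v * (Φ₀ p)⁻¹) * Φ₁ p := fun v => by
    rw [fderiv_matrix_mul (dAi p hpU) (dB p hpU) v,
      fderiv_matrix_inv (dA p hpU) (huA p hpU) v]
  -- final positivity pieces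
  have haiPSD : ((Φ₀ p)⁻¹).PosSemidef := ((hpos₀ p hp).inv).posSemidef
  have hbPSD : (Φ₁ p).PosSemidef := (hpos₁ p hp).posSemidef
  have hposR : 0 ≤ Matrix.trace (fderiv ℝ (fun q => (Φ₀ q)⁻¹ * Φ₁ q) p (1, 0) *
      (p.1 • ((Φ₁ p)⁻¹ * fderiv ℝ Φ₁ p (1, 0)) - p.1 • ((Φ₀ p)⁻¹ * fderiv ℝ Φ₀ p (1, 0)))) := by
    have hsm : p.1 • ((Φ₁ p)⁻¹ * fderiv ℝ Φ₁ p (1, 0))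
        - p.1 • ((Φ₀ p)⁻¹ * fderiv ℝ Φ₀ p (1, 0))
        = p.1 • ((Φ₁ p)⁻¹ * fderiv ℝ Φ₁ p (1, 0) - (Φ₀ p)⁻¹ * fderiv ℝ Φ₀ p (1, 0)) :=
      (smul_sub _ _ _).symm
    rw [hsm, hXv (1, 0),
      Xr_eq ((Φ₀ p)⁻¹) (Φ₁ p) ((Φ₁ p)⁻¹) (fderiv ℝ Φ₀ p (1, 0)) (fderiv ℝ Φ₁ p (1, 0))
        hBiB hAiT hBiT hArT hBrT,
      Matrix.mul_smul, Matrix.trace_smul]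
    exact mul_nonneg hp.le (trace_quad_nonneg haiPSD hbPSD _)
  have hposZ : 0 ≤ Matrix.trace (fderiv ℝ (fun q => (Φ₀ q)⁻¹ * Φ₁ q) p (0, 1) *
      (p.1 • ((Φ₁ p)⁻¹ * fderiv ℝ Φ₁ p (0, 1)) - p.1 • ((Φ₀ p)⁻¹ * fderiv ℝ Φ₀ p (0, 1)))) := by
    have hsm : p.1 • ((Φ₁ p)⁻¹ * fderiv ℝ Φ₁ p (0, 1))
        - p.1 • ((Φ₀ p)⁻¹ * fderiv ℝ Φ₀ p (0, 1))
        = p.1 • ((Φ₁ p)⁻¹ * fderiv ℝ Φ₁ p (0, 1) - (Φ₀ p)⁻¹ * fderiv ℝ Φ₀ p (0, 1)) :=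
      (smul_sub _ _ _).symm
    rw [hsm, hXv (0, 1),
      Xr_eq ((Φ₀ p)⁻¹) (Φ₁ p) ((Φ₁ p)⁻¹) (fderiv ℝ Φ₀ p (0, 1)) (fderiv ℝ Φ₁ p (0, 1))
        hBiB hAiT hBiT hAzT hBzT,
      Matrix.mul_smul, Matrix.trace_smul]
    exact mul_nonneg hp.le (trace_quad_nonneg haiPSD hbPSD _)
  -- Step D : differentiate the trace forms
  have eTR : fderiv ℝ (fun q => Matrix.trace (((Φ₀ q)⁻¹ * Φ₁ q) *
        (q.1 • ((Φ₁ q)⁻¹ * fderiv ℝ Φ₁ q (1, 0))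
          - q.1 • ((Φ₀ q)⁻¹ * fderiv ℝ Φ₀ q (1, 0))))) p (1, 0)
      = Matrix.trace (((Φ₀ p)⁻¹ * Φ₁ p) *
          fderiv ℝ (fun q => q.1 • ((Φ₁ q)⁻¹ * fderiv ℝ Φ₁ q (1, 0))
            - q.1 • ((Φ₀ q)⁻¹ * fderiv ℝ Φ₀ q (1, 0))) p (1, 0))
        + Matrix.trace (fderiv ℝ (fun q => (Φ₀ q)⁻¹ * Φ₁ q) p (1, 0) *
          (p.1 • ((Φ₁ p)⁻¹ * fderiv ℝ Φ₁ p (1, 0))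
            - p.1 • ((Φ₀ p)⁻¹ * fderiv ℝ Φ₀ p (1, 0)))) := by
    rw [fderiv_trace ((dX p hpU).fun_mul (dKR p hpU)) (1, 0),
      fderiv_matrix_mul (dX p hpU) (dKR p hpU) (1, 0), Matrix.trace_add]
  have eTZ : fderiv ℝ (fun q => Matrix.trace (((Φ₀ q)⁻¹ * Φ₁ q) *
        (q.1 • ((Φ₁ q)⁻¹ * fderiv ℝ Φ₁ q (0, 1))
          - q.1 • ((Φ₀ q)⁻¹ * fderiv ℝ Φ₀ q (0, 1))))) p (0, 1)
      = Matrix.trace (((Φ₀ p)⁻¹ * Φ₁ p) *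
          fderiv ℝ (fun q => q.1 • ((Φ₁ q)⁻¹ * fderiv ℝ Φ₁ q (0, 1))
            - q.1 • ((Φ₀ q)⁻¹ * fderiv ℝ Φ₀ q (0, 1))) p (0, 1))
        + Matrix.trace (fderiv ℝ (fun q => (Φ₀ q)⁻¹ * Φ₁ q) p (0, 1) *
          (p.1 • ((Φ₁ p)⁻¹ * fderiv ℝ Φ₁ p (0, 1))
            - p.1 • ((Φ₀ p)⁻¹ * fderiv ℝ Φ₀ p (0, 1)))) := by
    rw [fderiv_trace ((dX p hpU).fun_mul (dKZ p hpU)) (0, 1),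
      fderiv_matrix_mul (dX p hpU) (dKZ p hpU) (0, 1), Matrix.trace_add]
  -- assemble the key inequality
  have key : 0 ≤ p.1 * pdR (pdR (fun q => Matrix.trace ((Φ₀ q)⁻¹ * Φ₁ q))) p
      + pdR (fun q => Matrix.trace ((Φ₀ q)⁻¹ * Φ₁ q)) p
      + p.1 * pdZ (pdZ (fun q => Matrix.trace ((Φ₀ q)⁻¹ * Φ₁ q))) p := by
    have hsum : p.1 * pdR (pdR (fun q => Matrix.trace ((Φ₀ q)⁻¹ * Φ₁ q))) p
        + pdR (fun q => Matrix.trace ((Φ₀ q)⁻¹ * Φ₁ q)) p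
        + p.1 * pdZ (pdZ (fun q => Matrix.trace ((Φ₀ q)⁻¹ * Φ₁ q))) p
        = Matrix.trace (((Φ₀ p)⁻¹ * Φ₁ p) *
            (fderiv ℝ (fun q => q.1 • ((Φ₁ q)⁻¹ * fderiv ℝ Φ₁ q (1, 0))
              - q.1 • ((Φ₀ q)⁻¹ * fderiv ℝ Φ₀ q (1, 0))) p (1, 0)
            + fderiv ℝ (fun q => q.1 • ((Φ₁ q)⁻¹ * fderiv ℝ Φ₁ q (0, 1))
              - q.1 • ((Φ₀ q)⁻¹ * fderiv ℝ Φ₀ q (0, 1))) p (0, 1)))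
          + (Matrix.trace (fderiv ℝ (fun q => (Φ₀ q)⁻¹ * Φ₁ q) p (1, 0) *
              (p.1 • ((Φ₁ p)⁻¹ * fderiv ℝ Φ₁ p (1, 0))
                - p.1 • ((Φ₀ p)⁻¹ * fderiv ℝ Φ₀ p (1, 0))))
            + Matrix.trace (fderiv ℝ (fun q => (Φ₀ q)⁻¹ * Φ₁ q) p (0, 1) *
              (p.1 • ((Φ₁ p)⁻¹ * fderiv ℝ Φ₁ p (0, 1))
                - p.1 • ((Φ₀ p)⁻¹ * fderiv ℝ Φ₀ p (0, 1))))) := by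
      rw [← eA1, ← eA2, hTRc, hTZc, eTR, eTZ, Matrix.mul_add, Matrix.trace_add]
      ring
    rw [hsum, hKsum]
    simp only [Matrix.mul_zero, Matrix.trace_zero, zero_add]
    exact add_nonneg hposR hposZ
  -- conclude
  have hne : p.1 ≠ 0 := ne_of_gt hp
  have expand : pdR (pdR fun q => Matrix.trace ((Φ₀ q)⁻¹ * Φ₁ q)) p
      + 1 / p.1 * pdR (fun q => Matrix.trace ((Φ₀ q)⁻¹ * Φ₁ q)) p
      + pdZ (pdZ fun q => Matrix.trace ((Φ₀ q)⁻¹ * Φ₁ q)) p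
      = (1 / p.1) * (p.1 * pdR (pdR (fun q => Matrix.trace ((Φ₀ q)⁻¹ * Φ₁ q))) p
        + pdR (fun q => Matrix.trace ((Φ₀ q)⁻¹ * Φ₁ q)) p
        + p.1 * pdZ (pdZ (fun q => Matrix.trace ((Φ₀ q)⁻¹ * Φ₁ q))) p) := by
    field_simp
  rw [expand]
  exact mul_nonneg (by positivity) key
end
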